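/- There exists an angle φ < π/2 such that every eigenvalue μ of the matrix M = [[0,1,0],[−1,0,−1],[0,1,1]] satisfies μ ≠ 0 and |arg μ| < φ. Equivalently, the spectrum of the symbol a(ζ) = M|ζ|² is contained in the open sector Σ_φ = {z ∈ ℂ \ {0} : |arg z| < φ} for all ζ ∈ ℝⁿ \ {0}. -/

import Mathlib

open Real

lemma cubic_root_bounds (μ : ℂ) (h : μ ^ 3 - μ ^ 2 + 2 * μ - 1 = 0) :
    0 < μ.re ∧ μ.im ^ 2 < 49 * μ.re ^ 2 := by
  obtain ⟨x, y⟩ := μ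
  rw [Complex.ext_iff] at h
  simp only [Complex.zero_re, Complex.zero_im, Complex.sub_re, Complex.sub_im, Complex.add_re,
    Complex.add_im, Complex.mul_re, Complex.mul_im, pow_succ, pow_zero, one_mul,
    Complex.one_re, Complex.one_im, Complex.re_ofNat, Complex.im_ofNat] at h
  obtain ⟨hre, him⟩ := h
  show 0 < x ∧ y ^ 2 < 49 * x ^ 2
  have hre' : x ^ 3 - 3 * x * y ^ 2 - (x ^ 2 - y ^ 2) + 2 * x - 1 = 0 := by
    ring_nf; ring_nf at hre; linarith
  have him' : y * (3 * x ^ 2 - y ^ 2 - 2 * x + 2) = 0 := by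
    ring_nf; ring_nf at him; linarith
  rcases mul_eq_zero.mp him' with h0 | hq
  · rw [h0] at hre'
    have hx5 : 1/5 < x := by nlinarith [sq_nonneg (x - 2/5), sq_nonneg x, sq_nonneg (x-1)]
    exact ⟨by linarith, by rw [h0]; nlinarith⟩
  · have hy2 : y ^ 2 = 3 * x ^ 2 - 2 * x + 2 := by linarith
    have hg : 8 * x ^ 3 - 8 * x ^ 2 + 6 * x - 1 = 0 := by nlinarith [hre', hy2]
    have hx5 : 1/5 < x := by nlinarith [sq_nonneg (x - 1/3), sq_nonneg x]
    exact ⟨by linarith, by nlinarith [hy2, hx5, sq_nonneg x]⟩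

lemma arg_lt_of_bounds {z : ℂ} (hz : z ≠ 0) (hre : 0 < z.re) (him : z.im ^ 2 < 49 * z.re ^ 2) :
    |z.arg| < Real.arccos (1/8) := by
  have habs : 0 < ‖z‖ := norm_pos_iff.mpr hz
  have habs2 : (‖z‖) ^ 2 = z.re ^ 2 + z.im ^ 2 := by
    rw [Complex.sq_norm, Complex.normSq_apply]; ring
  have h8 : ‖z‖ < 8 * z.re := by nlinarith [habs, habs2, him, hre]
  have hcos : (1:ℝ)/8 < Real.cos |z.arg| := by
    rw [Real.cos_abs, Complex.cos_arg hz, div_lt_div_iff₀ (by norm_num) habs]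
    linarith
  have h1 : Real.cos (Real.arccos (1/8)) < Real.cos |z.arg| := by
    rwa [Real.cos_arccos (by norm_num) (by norm_num)]
  by_contra hle
  push_neg at hle
  have h2 : Real.cos |z.arg| ≤ Real.cos (Real.arccos (1/8)) :=
    (Real.strictAntiOn_cos.le_iff_ge ⟨abs_nonneg _, Complex.abs_arg_le_pi _⟩
      ⟨Real.arccos_nonneg _, Real.arccos_le_pi _⟩).mpr hle
  linarith

lemma mem_spectrum_cubic (μ : ℂ)
    (hμ : μ ∈ spectrum ℂ (!![(0:ℂ), 1, 0; -1, 0, -1; 0, 1, 1])) :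
    μ ^ 3 - μ ^ 2 + 2 * μ - 1 = 0 := by
  rw [spectrum.mem_iff] at hμ
  rw [Matrix.isUnit_iff_isUnit_det, isUnit_iff_ne_zero, not_not] at hμ
  rw [show (algebraMap ℂ (Matrix (Fin 3) (Fin 3) ℂ)) μ = μ • (1 : Matrix (Fin 3) (Fin 3) ℂ) from
    (Algebra.algebraMap_eq_smul_one μ)] at hμ
  simp [Matrix.det_fin_three, Matrix.smul_apply, Matrix.one_apply] at hμ
  linear_combination hμ

lemma spectrum_key (μ : ℂ)
    (hμ : μ ∈ spectrum ℂ (!![(0:ℂ), 1, 0; -1, 0, -1; 0, 1, 1])) :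
    μ ≠ 0 ∧ |μ.arg| < Real.arccos (1/8) := by
  obtain ⟨hre, him⟩ := cubic_root_bounds μ (mem_spectrum_cubic μ hμ)
  have hz : μ ≠ 0 := fun h => by simp [h] at hre
  exact ⟨hz, arg_lt_of_bounds hz hre him⟩

/-- There exists an angle `φ < π/2` such that every eigenvalue `μ` of
`M = [[0,1,0],[-1,0,-1],[0,1,1]]` is nonzero with `|arg μ| < φ`; equivalently the spectrum
of the symbol `a(ζ) = M |ζ|²` lies in the open sector `Σ_φ` for all `ζ ≠ 0`. -/
theorem thermoelastic_matrix_sector :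
    ∃ φ : ℝ, φ < π / 2 ∧ 0 ≤ φ ∧
      (∀ μ ∈ spectrum ℂ (!![(0:ℂ), 1, 0; -1, 0, -1; 0, 1, 1]), μ ≠ 0 ∧ |μ.arg| < φ) ∧
      (∀ (n : ℕ) (ζ : EuclideanSpace ℝ (Fin n)), ζ ≠ 0 →
        ∀ z ∈ spectrum ℂ (((‖ζ‖ ^ 2 : ℝ) : ℂ) • !![(0:ℂ), 1, 0; -1, 0, -1; 0, 1, 1]),
          z ≠ 0 ∧ |z.arg| < φ) := by
  refine ⟨Real.arccos (1/8), Real.arccos_lt_pi_div_two.mpr (by norm_num),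
    Real.arccos_nonneg _, fun μ hμ => spectrum_key μ hμ, ?_⟩
  intro n ζ hζ z hz
  have hnorm : (0:ℝ) < ‖ζ‖ ^ 2 := by
    have : ‖ζ‖ ≠ 0 := norm_ne_zero_iff.mpr hζ
    positivity
  have hc : ((‖ζ‖ ^ 2 : ℝ) : ℂ) ≠ 0 := by
    simp only [ne_eq, Complex.ofReal_eq_zero]
    exact ne_of_gt hnorm
  rw [show ((‖ζ‖ ^ 2 : ℝ) : ℂ) • !![(0:ℂ), 1, 0; -1, 0, -1; 0, 1, 1]
      = (Units.mk0 _ hc : ℂˣ) • !![(0:ℂ), 1, 0; -1, 0, -1; 0, 1, 1] from rfl,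
    spectrum.unit_smul_eq_smul] at hz
  obtain ⟨μ, hμ, rfl⟩ := hz
  obtain ⟨hμ0, hμarg⟩ := spectrum_key μ hμ
  refine ⟨?_, ?_⟩
  · simp only [Units.smul_def, Units.smul_mk0, smul_eq_mul]
    exact mul_ne_zero hc hμ0
  · show |(((Units.mk0 _ hc : ℂˣ) • μ : ℂ)).arg| < _
    have : ((Units.mk0 _ hc : ℂˣ) • μ : ℂ) = ((‖ζ‖ ^ 2 : ℝ) : ℂ) * μ := rfl
    rw [this, Complex.arg_real_mul μ hnorm]
    exact hμarg
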